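/- Let p be a prime, d ≥ 1, V = F_p^d, and let G be an irreducible subgroup of GL(V). Let Δ be a G-invariant subset of V (i.e., Δ·g = Δ for all g ∈ G). If for some m ≥ 1 the m-fold sumset m·Δ contains a nontrivial line b + F_p·v for some b ∈ V and some nonzero v ∈ V, then the dm-fold sumset dm·Δ equals V. -/

import Mathlib

/-- The `m`-fold sumset of a subset `Δ` of an additive commutative monoid. -/
def sumset {V : Type*} [AddCommMonoid V] (m : ℕ) (Δ : Set V) : Set V :=
  {x | ∃ f : Fin m → V, (∀ i, f i ∈ Δ) ∧ ∑ i, f i = x}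

/-- The orbit of a vector `v` under a subgroup `G` of the general linear group
(realized as units of the endomorphism ring). -/
def orbitOf {R V : Type*} [CommSemiring R] [AddCommMonoid V] [Module R V]
    (G : Subgroup (Module.End R V)ˣ) (v : V) : Set V :=
  {w | ∃ g ∈ G, (g : Module.End R V) v = w}

/-- A linear group `G ≤ GL(V)` is irreducible if the only `G`-invariant subspaces
of `V` are `0` and `V`. -/
def IsIrreducibleLinearGroup {R V : Type*} [CommSemiring R] [AddCommMonoid V] [Module R V]
    (G : Subgroup (Module.End R V)ˣ) : Prop :=
  ∀ W : Submodule R V, (∀ g ∈ G, ∀ w ∈ W, (g : Module.End R V) w ∈ W) → W = ⊥ ∨ W = ⊤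

lemma sum_mem_sumset {V : Type*} [AddCommMonoid V] (m d : ℕ) (Δ : Set V) (x : Fin d → V)
    (hx : ∀ i, x i ∈ sumset m Δ) : (∑ i, x i) ∈ sumset (d * m) Δ := by
  choose f hf hfx using hx
  refine ⟨fun k => f (finProdFinEquiv.symm k).1 (finProdFinEquiv.symm k).2,
    fun k => hf _ _, ?_⟩
  rw [← Fintype.sum_equiv finProdFinEquiv (fun q : Fin d × Fin m => f q.1 q.2) _
    (by intro q; simp)]
  rw [Fintype.sum_prod_type]
  exact Finset.sum_congr rfl fun i _ => hfx i

theorem sumset_univ_of_contains_line (p d : ℕ) (hp : p.Prime) (hd : 1 ≤ d)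
    (G : Subgroup (Module.End (ZMod p) (Fin d → ZMod p))ˣ)
    (hirr : IsIrreducibleLinearGroup G)
    (Δ : Set (Fin d → ZMod p))
    (hinv : ∀ g ∈ G, (fun w => (g : Module.End (ZMod p) (Fin d → ZMod p)) w) '' Δ = Δ)
    (m : ℕ) (hm : 1 ≤ m) (b v : Fin d → ZMod p) (hv : v ≠ 0)
    (hline : {x | ∃ α : ZMod p, x = b + α • v} ⊆ sumset m Δ) :
    sumset (d * m) Δ = Set.univ := by
  haveI := Fact.mk hp
  -- sumset m Δ is G-invariant
  have hsum_inv : ∀ g ∈ G, ∀ x ∈ sumset m Δ,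
      (g : Module.End (ZMod p) (Fin d → ZMod p)) x ∈ sumset m Δ := by
    rintro g hg x ⟨f, hf, hfx⟩
    refine ⟨fun i => (g : Module.End (ZMod p) (Fin d → ZMod p)) (f i), fun i => ?_, ?_⟩
    · rw [← hinv g hg]; exact ⟨f i, hf i, rfl⟩
    · rw [← map_sum, hfx]
  -- span of orbit of v is all of V
  have hspan : Submodule.span (ZMod p) (orbitOf G v) = ⊤ := by
    have hGinv : ∀ g ∈ G, ∀ w ∈ Submodule.span (ZMod p) (orbitOf G v),
        (g : Module.End (ZMod p) (Fin d → ZMod p)) w ∈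
          Submodule.span (ZMod p) (orbitOf G v) := by
      intro g hg w hw
      have himg : (g : Module.End (ZMod p) (Fin d → ZMod p)) '' orbitOf G v ⊆ orbitOf G v := by
        rintro _ ⟨_, ⟨h', hh', rfl⟩, rfl⟩
        exact ⟨g * h', mul_mem hg hh', rfl⟩
      have : (g : Module.End (ZMod p) (Fin d → ZMod p)) w ∈
          Submodule.map (g : Module.End (ZMod p) (Fin d → ZMod p)) (Submodule.span (ZMod p) (orbitOf G v)) :=
        Submodule.mem_map_of_mem hw
      rw [Submodule.map_span] at this
      exact Submodule.span_mono himg this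
    rcases hirr (Submodule.span (ZMod p) (orbitOf G v)) hGinv with h | h
    · exfalso
      have hv' : v ∈ Submodule.span (ZMod p) (orbitOf G v) :=
        Submodule.subset_span ⟨1, one_mem G, rfl⟩
      rw [h, Submodule.mem_bot] at hv'
      exact hv hv'
    · exact h
  -- extract a basis from the orbit
  obtain ⟨s, hs_sub, hs_span, hs_li⟩ := exists_linearIndependent (ZMod p) (orbitOf G v)
  haveI : Fintype s := hs_li.setFinite.fintype
  let B : Module.Basis s (ZMod p) (Fin d → ZMod p) := Module.Basis.mk hs_li (by rw [Subtype.range_coe, hs_span, hspan])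
  have hcard : Fintype.card s = d := by
    have h1 := Module.finrank_eq_card_basis B
    have h2 : Module.finrank (ZMod p) (Fin d → ZMod p) = d :=
      Module.finrank_fin_fun (ZMod p)
    omega
  let e : Fin d ≃ s := (Fintype.equivFinOfCardEq hcard).symm
  let B' : Module.Basis (Fin d) (ZMod p) (Fin d → ZMod p) := B.reindex e.symm
  have hB' : ∀ i, B' i ∈ orbitOf G v := by
    intro i
    have : B' i = B (e i) := by simp [B']
    rw [this]
    have : B (e i) = (e i : Fin d → ZMod p) := Module.Basis.mk_apply hs_li _ _
    rw [this]
    exact hs_sub (e i).2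
  choose g hgG hgv using hB'
  -- show every x is in the sumset
  ext x
  simp only [Set.mem_univ, iff_true]
  set c : Fin d → ZMod p := ∑ i, (g i : Module.End (ZMod p) (Fin d → ZMod p)) b with hc
  set α : Fin d → ZMod p := fun i => B'.repr (x - c) i with hα
  have hx : x = ∑ i, ((g i : Module.End (ZMod p) (Fin d → ZMod p)) b + α i • (g i : Module.End (ZMod p) (Fin d → ZMod p)) v) := by
    have hrep : ∑ i, α i • B' i = x - c := by
      have := B'.sum_repr (x - c)
      simpa [hα] using this
    calc x = c + (x - c) := by ring
    _ = ∑ i, (g i : Module.End (ZMod p) (Fin d → ZMod p)) b + ∑ i, α i • B' i := by rw [hrep, hc]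
    _ = _ := by
        rw [← Finset.sum_add_distrib]
        refine Finset.sum_congr rfl fun i _ => ?_
        rw [hgv i]
  rw [hx]
  apply sum_mem_sumset
  intro i
  have hmem : (g i : Module.End (ZMod p) (Fin d → ZMod p)) (b + α i • v) ∈ sumset m Δ :=
    hsum_inv (g i) (hgG i) _ (hline ⟨α i, rfl⟩)
  simpa [map_add, map_smul] using hmem
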